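/- If C is a simplicial set such that the map C^{Δ[2]} → C^{Λ[2,1]} induced by composition with the horn inclusion Λ[2,1] ↪ Δ[2] is a trivial Kan fibration, then C is a quasi-category. -/

import Mathlib

open CategoryTheory Simplicial MonoidalCategory

/-- Simplicial sets form a (cartesian) monoidal closed category; this provides the
internal homs `C^A := (ihom A).obj C`. -/
noncomputable instance : MonoidalClosed SSet.{0} :=
  inferInstanceAs (MonoidalClosed (SimplexCategoryᵒᵖ ⥤ Type 0))

/-- A map of simplicial sets is a trivial Kan fibration if it has the right lifting
property with respect to all boundary inclusions `∂Δ[n] ⟶ Δ[n]`. -/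
def SSet.TrivialKanFibration {X Y : SSet.{0}} (p : X ⟶ Y) : Prop :=
  ∀ n : ℕ, HasLiftingProperty (SSet.boundary n).ι p

open SimplexCategory

namespace QCAux
noncomputable section
open Classical SSet

/-- view a simplex of `Δ[n]` as a morphism in the simplex category -/
def toHom {n : ℕ} {k : SimplexCategoryᵒᵖ} (x : Δ[n].obj k) :
    (⦋k.unop.len⦌ : SimplexCategory) ⟶ ⦋n⦌ := x.down

/-- inverse of `toHom` -/
def fromHom {n : ℕ} {k : SimplexCategoryᵒᵖ} (f : (⦋k.unop.len⦌ : SimplexCategory) ⟶ ⦋n⦌) :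
    Δ[n].obj k := ULift.up f

/-- view a morphism of `SimplexCategoryᵒᵖ` as a morphism between `mk len`s -/
def θHom {k k' : SimplexCategoryᵒᵖ} (θ : k ⟶ k') :
    (⦋k'.unop.len⦌ : SimplexCategory) ⟶ ⦋k.unop.len⦌ := θ.unop

variable {m : ℕ} (i : Fin (m + 2))

lemma not_surj {n : ℕ} {k : SimplexCategoryᵒᵖ} (x : (∂Δ[n] : SSet.{0}).obj k) :
    ∃ c, c ∉ Set.range (stdSimplex.asOrderHom x.1) := by
  by_contra hs
  push_neg at hs
  exact x.2 (fun b => hs b)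

/-- The restriction of the `i`-th face map to the boundary, valued in the horn. -/
def bToHorn : (∂Δ[m] : SSet.{0}) ⟶ Λ[m+1, i] where
  app k := ↾fun x => ⟨fromHom (toHom x.1 ≫ δ i), by
    obtain ⟨c, hc⟩ := not_surj x
    intro hu
    have := hu ▸ Set.mem_univ (i.succAbove c)
    rcases this with ⟨j, hj⟩ | hj
    · exact hc ⟨j, i.succAbove_right_injective hj⟩
    · exact i.succAbove_ne c hj⟩
  naturality k k' θ := by
    ext x
    apply Subtype.ext
    apply ULift.ext
    change (θHom θ ≫ toHom x.1) ≫ δ i = θHom θ ≫ (toHom x.1 ≫ δ i)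
    simp

lemma bToHorn_comp_incl :
    bToHorn i ≫ (horn (m+1) i).ι =
      (boundary m).ι ≫ SSet.stdSimplex.map (δ i) := by
  ext k x
  rfl

lemma factor_nonsurj {k : SimplexCategoryᵒᵖ} (x : (⦋k.unop.len⦌ : SimplexCategory) ⟶ ⦋m+1⦌)
    (hi : i ∉ Set.range x.toOrderHom) {c : Fin (m+2)} (hc : c ∉ Set.range x.toOrderHom)
    (hci : c ≠ i) : ¬ Function.Surjective (factor_δ x i).toOrderHom := by
  obtain ⟨c', hc'⟩ := Fin.exists_succAbove_eq hci
  intro hs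
  obtain ⟨j, hj⟩ := hs c'
  apply hc
  refine ⟨j, ?_⟩
  have hspec : factor_δ x i ≫ δ i = x :=
    factor_δ_spec x i (fun b hb => hi ⟨b, hb⟩)
  calc x.toOrderHom j = (factor_δ x i ≫ δ i).toOrderHom j := by rw [hspec]
    _ = i.succAbove ((factor_δ x i).toOrderHom j) := rfl
    _ = c := by rw [hj, hc']

lemma factor_nat {k k' : SimplexCategoryᵒᵖ} (θ : k ⟶ k')
    (x : (⦋k.unop.len⦌ : SimplexCategory) ⟶ ⦋m+1⦌) :
    factor_δ (θHom θ ≫ x) i = θHom θ ≫ factor_δ x i := by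
  simp [factor_δ]

/-- trivial fibrations lift against horn inclusions -/
lemma horn_lifting {X Y : SSet.{0}} (p : X ⟶ Y)
    (hp : ∀ n : ℕ, HasLiftingProperty (SSet.boundary n).ι p) :
    HasLiftingProperty ((SSet.horn (m+1) i).ι) p := by
  constructor
  intro f g sq
  have sq1 : CommSq (bToHorn i ≫ f) ((boundary m).ι) p
      (SSet.stdSimplex.map (δ i) ≫ g) := by
    constructor
    rw [Category.assoc, sq.w, ← Category.assoc, bToHorn_comp_incl, Category.assoc]
  obtain ⟨⟨l1⟩⟩ := (hp m).sq_hasLift sq1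
  have memΛ : ∀ {k : SimplexCategoryᵒᵖ} (x : (∂Δ[m+1] : SSet.{0}).obj k),
      i ∈ Set.range (stdSimplex.asOrderHom x.1) →
      Set.range (stdSimplex.asOrderHom x.1) ∪ {i} ≠ Set.univ := by
    intro k x H hu
    obtain ⟨c, hc⟩ := not_surj x
    have := hu ▸ Set.mem_univ c
    rcases this with hj | hj
    · exact hc hj
    · exact hc (hj ▸ H)
  -- pointwise form of l1.fac_left
  have l1fac : ∀ {k : SimplexCategoryᵒᵖ} (y : (∂Δ[m] : SSet.{0}).obj k),
      l1.l.app k y.1 = f.app k ⟨fromHom (toHom y.1 ≫ δ i), (bToHorn i |>.app k y).2⟩ :=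
    fun {k} y => ConcreteCategory.congr_hom (congr_app l1.fac_left k) y
  -- the extension of `f` to the full boundary
  let f' : (∂Δ[m+1] : SSet.{0}) ⟶ X :=
    { app := fun k => ↾fun x =>
        if H : i ∈ Set.range (stdSimplex.asOrderHom x.1) then
          f.app k ⟨x.1, memΛ x H⟩
        else
          l1.l.app k (fromHom (factor_δ (toHom x.1) i))
      naturality := by
        intro k k' θ
        ext x
        have hmap1 : toHom ((∂Δ[m+1] : SSet.{0}).map θ x).1 = θHom θ ≫ toHom x.1 := rfl
        by_cases H' : i ∈ Set.range (stdSimplex.asOrderHom ((∂Δ[m+1] : SSet.{0}).map θ x).1)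
        · have H : i ∈ Set.range (stdSimplex.asOrderHom x.1) := by
            obtain ⟨j, hj⟩ := H'
            exact ⟨(θHom θ).toOrderHom j, hj⟩
          show dite (i ∈ Set.range (stdSimplex.asOrderHom ((∂Δ[m+1] : SSet.{0}).map θ x).1)) _ _ = X.map θ (dite _ _ _)
          rw [dif_pos H', dif_pos H]
          have hnat : f.app k' ((Λ[m+1,i] : SSet.{0}).map θ ⟨x.1, memΛ x H⟩)
              = X.map θ (f.app k ⟨x.1, memΛ x H⟩) := ConcreteCategory.congr_hom (f.naturality θ) ⟨x.1, memΛ x H⟩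
          rw [← hnat]
          congr 1
        · by_cases H : i ∈ Set.range (stdSimplex.asOrderHom x.1)
          · show dite (i ∈ Set.range (stdSimplex.asOrderHom ((∂Δ[m+1] : SSet.{0}).map θ x).1)) _ _ = X.map θ (dite _ _ _)
            rw [dif_neg H', dif_pos H]
            obtain ⟨c, hc⟩ := not_surj x
            have hci : c ≠ i := fun e => hc (e ▸ H)
            have hi' : i ∉ Set.range (θHom θ ≫ toHom x.1).toOrderHom := by
              rw [← hmap1]; exact H'
            have hc' : c ∉ Set.range (θHom θ ≫ toHom x.1).toOrderHom := by
              rintro ⟨j, hj⟩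
              exact hc ⟨(θHom θ).toOrderHom j, hj⟩
            have hns : ¬ Function.Surjective
                (stdSimplex.asOrderHom ((fromHom (factor_δ (θHom θ ≫ toHom x.1) i)) : Δ[m].obj k')) :=
              factor_nonsurj i _ hi' hc' hci
            have hfac := l1fac (k := k') ⟨fromHom (factor_δ (θHom θ ≫ toHom x.1) i), hns⟩
            have hgoal : l1.l.app k' (fromHom (factor_δ (toHom ((∂Δ[m+1] : SSet.{0}).map θ x).1) i))
                = l1.l.app k' (fromHom (factor_δ (θHom θ ≫ toHom x.1) i)) := by rw [hmap1]
            refine (hgoal.trans hfac).trans ?_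
            have hspec : factor_δ (θHom θ ≫ toHom x.1) i ≫ δ i = θHom θ ≫ toHom x.1 :=
              factor_δ_spec _ i (fun b hb => hi' ⟨b, hb⟩)
            have hnat : f.app k' ((Λ[m+1,i] : SSet.{0}).map θ ⟨x.1, memΛ x H⟩)
                = X.map θ (f.app k ⟨x.1, memΛ x H⟩) := ConcreteCategory.congr_hom (f.naturality θ) ⟨x.1, memΛ x H⟩
            rw [← hnat]
            exact congrArg (f.app k') (Subtype.ext (congrArg ULift.up hspec))
          · show dite (i ∈ Set.range (stdSimplex.asOrderHom ((∂Δ[m+1] : SSet.{0}).map θ x).1)) _ _ = X.map θ (dite _ _ _)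
            rw [dif_neg H', dif_neg H]
            have hnat : l1.l.app k' (Δ[m].map θ (fromHom (factor_δ (toHom x.1) i)))
                = X.map θ (l1.l.app k (fromHom (factor_δ (toHom x.1) i))) :=
              ConcreteCategory.congr_hom (l1.l.naturality θ) (fromHom (factor_δ (toHom x.1) i))
            rw [← hnat]
            exact congrArg (l1.l.app k') (congrArg ULift.up
              (by exact (congrArg (factor_δ · i) hmap1).trans (factor_nat i θ (toHom x.1)))) }
  have sq2 : CommSq f' ((boundary (m+1)).ι) p g := by
    constructor
    ext k x
    show p.app k (dite _ _ _) = g.app k x.1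
    by_cases H : i ∈ Set.range (stdSimplex.asOrderHom x.1)
    · rw [dif_pos H]
      exact ConcreteCategory.congr_hom (congr_app sq.w k) ⟨x.1, memΛ x H⟩
    · rw [dif_neg H]
      have hfr : p.app k (l1.l.app k (fromHom (factor_δ (toHom x.1) i)))
          = g.app k (fromHom (factor_δ (toHom x.1) i ≫ δ i)) :=
        ConcreteCategory.congr_hom (congr_app l1.fac_right k) (fromHom (factor_δ (toHom x.1) i))
      rw [hfr]
      exact congrArg (g.app k) (congrArg ULift.up
        (factor_δ_spec _ i (fun b hb => H ⟨b, hb⟩)))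
  obtain ⟨⟨l2⟩⟩ := (hp (m+1)).sq_hasLift sq2
  constructor
  constructor
  refine ⟨l2.l, ?_, l2.fac_right⟩
  ext k x
  have hns : ¬ Function.Surjective (stdSimplex.asOrderHom x.1) := by
    intro hs
    apply x.2
    rw [Set.eq_univ_iff_forall]
    intro b
    exact Or.inl (hs b)
  have hfl : l2.l.app k x.1 = f'.app k ⟨x.1, hns⟩ :=
    ConcreteCategory.congr_hom (congr_app l2.fac_left k) ⟨x.1, hns⟩
  show l2.l.app k x.1 = f.app k x
  rw [hfl]
  show dite _ _ _ = _
  by_cases H : i ∈ Set.range (stdSimplex.asOrderHom x.1)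
  · rw [dif_pos H]
    exact congrArg (f.app k) (Subtype.ext rfl)
  · rw [dif_neg H]
    have hx2 := (mem_horn_iff _ _).1 x.2
    rw [Set.ne_univ_iff_exists_notMem] at hx2
    obtain ⟨c, hc⟩ := hx2
    simp only [Set.mem_union, Set.mem_singleton_iff, not_or] at hc
    have hns' : ¬ Function.Surjective
        (stdSimplex.asOrderHom ((fromHom (factor_δ (toHom x.1) i)) : Δ[m].obj k)) :=
      factor_nonsurj i _ (fun hh => H hh) hc.1 hc.2
    have hfac := l1fac (k := k) ⟨fromHom (factor_δ (toHom x.1) i), hns'⟩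
    rw [hfac]
    exact congrArg (f.app k) (Subtype.ext (congrArg ULift.up
      (factor_δ_spec _ i (fun b hb => H ⟨b, hb⟩))))
end
end QCAux

namespace QCAux
noncomputable section
open Classical SSet

variable {n : ℕ} (i : Fin (n + 3))

/-- the retraction on vertices -/
def rf (a : Fin 3) (b : Fin (n + 3)) : Fin (n + 3) :=
  if a.val = 0 then min b i else if a.val = 1 then i else max b i

lemma rf_mono {a a' : Fin 3} {b b' : Fin (n + 3)} (ha : a ≤ a') (hb : b ≤ b') :
    rf i a b ≤ rf i a' b' := by
  obtain ⟨av, ha3⟩ := a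
  obtain ⟨av', ha3'⟩ := a'
  have hav : av ≤ av' := ha
  interval_cases av <;> interval_cases av' <;> simp only [rf] <;> norm_num <;>
  first
    | exact min_le_min hb le_rfl
    | exact min_le_right b i
    | exact (min_le_right b i).trans (le_max_right b' i)
    | exact le_max_right b' i
    | exact max_le_max hb le_rfl
    | omega

lemma rf_cases (a : Fin 3) (b : Fin (n + 3)) :
    rf i a b = b ∨ rf i a b = i := by
  obtain ⟨av, ha3⟩ := a
  interval_cases av <;> simp only [rf] <;> norm_num <;>
    first
      | exact le_total b i
      | exact (le_total b i).symm

/-- the section on vertices -/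
def gf (b : Fin (n + 3)) : Fin 3 :=
  if b < i then 0 else if b = i then 1 else 2

lemma gf_mono : Monotone (gf i) := by
  intro b b' hb
  simp only [gf]
  split_ifs <;>
    first
      | decide
      | (exfalso;
         simp only [Fin.lt_def, Fin.le_def, Fin.ext_iff, not_lt] at *
         omega)

lemma rf_gf (b : Fin (n + 3)) : rf i (gf i b) b = b := by
  rcases lt_trichotomy b i with h | h | h
  · simp [gf, rf, h, min_eq_left h.le]
  · simp [gf, rf, h]
  · have h1 : ¬ b < i := not_lt.mpr h.le
    have h2 : b ≠ i := h.ne'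
    simp [gf, rf, h1, h2, max_eq_left h.le]

/-- the retraction `Δ[2] ⊗ Δ[n+2] ⟶ Δ[n+2]` -/
def Rmap : (Δ[2] ⊗ Δ[n+2] : SSet.{0}) ⟶ Δ[n+2] where
  app k := ↾fun x => stdSimplex.objMk
    ⟨fun j => rf i (stdSimplex.asOrderHom x.1 j) (stdSimplex.asOrderHom x.2 j),
     fun j j' hj => rf_mono i ((stdSimplex.asOrderHom x.1).monotone hj) ((stdSimplex.asOrderHom x.2).monotone hj)⟩
  naturality k k' θ := rfl

/-- the section `Δ[n+2] ⟶ Δ[2] ⊗ Δ[n+2]` -/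
def Jmap : (Δ[n+2] : SSet.{0}) ⟶ Δ[2] ⊗ Δ[n+2] where
  app k := ↾fun x => (stdSimplex.objMk
    ⟨fun j => gf i (stdSimplex.asOrderHom x j), fun _ _ hj => gf_mono i ((stdSimplex.asOrderHom x).monotone hj)⟩, x)
  naturality k k' θ := rfl

end
end QCAux

namespace QCAux
noncomputable section
open Classical SSet MonoidalClosed

variable {n : ℕ} (i : Fin (n + 3))

lemma mem_R1 {k : SimplexCategoryᵒᵖ} (a : Δ[2].obj k) (x : (Λ[n+2,i] : SSet.{0}).obj k) :
    Set.range (stdSimplex.asOrderHom ((Rmap i).app k (a, x.1))) ∪ {i} ≠ Set.univ := by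
  have hx := (mem_horn_iff _ _).1 x.2
  rw [Set.ne_univ_iff_exists_notMem] at hx ⊢
  obtain ⟨c, hc⟩ := hx
  simp only [Set.mem_union, Set.mem_singleton_iff, not_or] at hc
  refine ⟨c, ?_⟩
  simp only [Set.mem_union, Set.mem_singleton_iff, not_or]
  refine ⟨?_, hc.2⟩
  rintro ⟨j, hj⟩
  rcases rf_cases i (stdSimplex.asOrderHom a j) (stdSimplex.asOrderHom x.1 j) with h | h
  · exact hc.1 ⟨j, by rw [← h]; exact hj⟩
  · exact hc.2 (by rw [← hj]; exact h)

lemma mem_R2 (h0 : 0 < i) (hn : i < Fin.last (n+2)) {k : SimplexCategoryᵒᵖ}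
    (a : (Λ[2,1] : SSet.{0}).obj k) (x : Δ[n+2].obj k) :
    Set.range (stdSimplex.asOrderHom ((Rmap i).app k (a.1, x))) ∪ {i} ≠ Set.univ := by
  have ha := (mem_horn_iff _ _).1 a.2
  rw [Set.ne_univ_iff_exists_notMem] at ha
  obtain ⟨c, hc⟩ := ha
  simp only [Set.mem_union, Set.mem_singleton_iff, not_or] at hc
  have hc3 : c.val = 0 ∨ c.val = 2 := by
    have := c.isLt
    have : c.val ≠ 1 := fun hv => hc.2 (Fin.ext hv)
    omega
  rw [Set.ne_univ_iff_exists_notMem]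
  rcases hc3 with hv | hv
  · -- `0` is not a value of `a`, so the composite avoids `0`
    refine ⟨0, ?_⟩
    simp only [Set.mem_union, Set.mem_singleton_iff, not_or]
    constructor
    · rintro ⟨j, hj⟩
      have hne : (stdSimplex.asOrderHom a.1 j).val ≠ 0 := by
        intro hz
        exact hc.1 ⟨j, Fin.ext (by rw [hz, hv])⟩
      have h3 := (stdSimplex.asOrderHom a.1 j).isLt
      have hj' : rf i (stdSimplex.asOrderHom a.1 j) (stdSimplex.asOrderHom x j) = 0 := hj
      simp only [rf] at hj'
      rcases (by omega : (stdSimplex.asOrderHom a.1 j).val = 0 ∨ (stdSimplex.asOrderHom a.1 j).val = 1 ∨ (stdSimplex.asOrderHom a.1 j).val = 2) with h | h | h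
      · exact hne h
      · rw [if_neg (show ¬(stdSimplex.asOrderHom a.1 j).val = 0 by omega), if_pos h] at hj'
        exact h0.ne' hj'
      · rw [if_neg (show ¬(stdSimplex.asOrderHom a.1 j).val = 0 by omega),
          if_neg (show ¬(stdSimplex.asOrderHom a.1 j).val = 1 by omega)] at hj'
        have : i ≤ (0 : Fin (n+3)) := hj' ▸ le_max_right _ i
        exact h0.ne' (le_antisymm this (Fin.zero_le i))
    · exact fun e => h0.ne' e.symm
  · -- `2` is not a value of `a`, so the composite avoids `last`
    refine ⟨Fin.last (n+2), ?_⟩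
    simp only [Set.mem_union, Set.mem_singleton_iff, not_or]
    constructor
    · rintro ⟨j, hj⟩
      have hne : (stdSimplex.asOrderHom a.1 j).val ≠ 2 := by
        intro hz
        exact hc.1 ⟨j, Fin.ext (by rw [hz, hv])⟩
      have h3 := (stdSimplex.asOrderHom a.1 j).isLt
      have hj' : rf i (stdSimplex.asOrderHom a.1 j) (stdSimplex.asOrderHom x j) = Fin.last (n+2) := hj
      simp only [rf] at hj'
      rcases (by omega : (stdSimplex.asOrderHom a.1 j).val = 0 ∨ (stdSimplex.asOrderHom a.1 j).val = 1 ∨ (stdSimplex.asOrderHom a.1 j).val = 2) with h | h | h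
      · rw [if_pos h] at hj'
        exact absurd (hj' ▸ (min_le_right _ i).trans_lt hn) (lt_irrefl _)
      · rw [if_neg (show ¬(stdSimplex.asOrderHom a.1 j).val = 0 by omega), if_pos h] at hj'
        exact hn.ne hj'
      · exact hne h
    · exact fun e => hn.ne e.symm

/-- the restriction of `Rmap` to `Δ[2] ⊗ Λ[n+2,i]` -/
def RΛ1 : (Δ[2] ⊗ Λ[n+2,i] : SSet.{0}) ⟶ Λ[n+2,i] where
  app k := ↾fun x => ⟨(Rmap i).app k (x.1, x.2.1), mem_R1 i x.1 x.2⟩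
  naturality k k' θ := rfl

/-- the restriction of `Rmap` to `Λ[2,1] ⊗ Δ[n+2]` -/
def RΛ2 (h0 : 0 < i) (hn : i < Fin.last (n+2)) :
    (Λ[2,1] ⊗ Δ[n+2] : SSet.{0}) ⟶ Λ[n+2,i] where
  app k := ↾fun x => ⟨(Rmap i).app k (x.1.1, x.2), mem_R2 i h0 hn x.1 x.2⟩
  naturality k k' θ := rfl

/-- the restriction of `Jmap` to the horn -/
def JΛ : (Λ[n+2,i] : SSet.{0}) ⟶ Δ[2] ⊗ Λ[n+2,i] where
  app k := ↾fun x => (stdSimplex.objMk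
    ⟨fun j => gf i (stdSimplex.asOrderHom x.1 j), fun _ _ hj => gf_mono i ((stdSimplex.asOrderHom x.1).monotone hj)⟩, x)
  naturality k k' θ := rfl

lemma E1 : (horn (n+2) i).ι ≫ Jmap i = JΛ i ≫ (Δ[2] ◁ (horn (n+2) i).ι) := rfl

lemma E2 : JΛ i ≫ RΛ1 i = 𝟙 _ := by
  ext k x
  apply Subtype.ext
  apply ULift.ext
  apply SimplexCategory.Hom.ext
  apply OrderHom.ext
  funext j
  exact rf_gf i (stdSimplex.asOrderHom x.1 j)

lemma E3 (h0 : 0 < i) (hn : i < Fin.last (n+2)) :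
    ((horn 2 1).ι ▷ (Λ[n+2,i] : SSet.{0})) ≫ RΛ1 i
      = ((Λ[2,1] : SSet.{0}) ◁ (horn (n+2) i).ι) ≫ RΛ2 i h0 hn := by
  ext k x
  apply Subtype.ext
  rfl

lemma uncurry_comp_pre_app {C : Type*} [Category C] [MonoidalCategory C] {A B X Y : C}
    [Closed A] [Closed B] (g : B ⟶ A) (hmap : Y ⟶ (ihom A).obj X) :
    uncurry (hmap ≫ (pre g).app X) = (g ▷ Y) ≫ uncurry hmap := by
  rw [uncurry_eq, uncurry_eq, MonoidalCategory.whiskerLeft_comp, Category.assoc,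
    id_tensor_pre_app_comp_ev, whisker_exchange_assoc]

end
end QCAux

/-- (Joyal) If `C` is a simplicial set for which the map `C^{Δ[2]} ⟶ C^{Λ[2,1]}`
induced by precomposition with the inner horn inclusion `Λ[2,1] ⟶ Δ[2]` is a trivial
Kan fibration, then `C` is a quasi-category. -/
theorem quasicategory_of_trivialKanFibration (C : SSet.{0})
    (h : SSet.TrivialKanFibration ((MonoidalClosed.pre ((SSet.horn 2 1).ι)).app C)) :
    SSet.Quasicategory C := by
  constructor
  intro n i σ₀ h0 hn
  have hlift : HasLiftingProperty ((SSet.horn (n+2) i).ι)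
      ((MonoidalClosed.pre ((SSet.horn 2 1).ι)).app C) :=
    QCAux.horn_lifting i _ h
  let u : (Λ[n+2,i] : SSet.{0}) ⟶ (ihom (Δ[2] : SSet.{0})).obj C :=
    MonoidalClosed.curry (QCAux.RΛ1 i ≫ σ₀)
  let v : (Δ[n+2] : SSet.{0}) ⟶ (ihom (Λ[2,1] : SSet.{0})).obj C :=
    MonoidalClosed.curry (QCAux.RΛ2 i h0 hn ≫ σ₀)
  have w : u ≫ (MonoidalClosed.pre ((SSet.horn 2 1).ι)).app C
      = (SSet.horn (n+2) i).ι ≫ v := by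
    apply MonoidalClosed.uncurry_injective
    rw [QCAux.uncurry_comp_pre_app, MonoidalClosed.uncurry_natural_left]
    show _ ≫ MonoidalClosed.uncurry (MonoidalClosed.curry _) = _ ≫ MonoidalClosed.uncurry (MonoidalClosed.curry _)
    rw [MonoidalClosed.uncurry_curry, MonoidalClosed.uncurry_curry, ← Category.assoc, ← Category.assoc,
      QCAux.E3 i h0 hn]
  have sq : CommSq u ((SSet.horn (n+2) i).ι)
      ((MonoidalClosed.pre ((SSet.horn 2 1).ι)).app C) v := ⟨w⟩
  obtain ⟨⟨L⟩⟩ := hlift.sq_hasLift sq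
  refine ⟨QCAux.Jmap i ≫ MonoidalClosed.uncurry L.l, ?_⟩
  rw [← Category.assoc, QCAux.E1 i, Category.assoc, ← MonoidalClosed.uncurry_natural_left,
    L.fac_left]
  show σ₀ = QCAux.JΛ i ≫ MonoidalClosed.uncurry (MonoidalClosed.curry _)
  rw [MonoidalClosed.uncurry_curry, ← Category.assoc, QCAux.E2 i, Category.id_comp]
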